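/- arXiv:1208.4835 — 6 statements merged into one kernel-verified Lean document; each statement's English description precedes it below -/
import Mathlib

section
/- Parametrize irreducible representations of SU(n) by dominant weights λ = (λ₁ ≥ λ₂ ≥ ... ≥ λ_{n-1} ≥ λₙ = 0) in ℤ^n, with dimension d_λ = ∏_{1 ≤ i < j ≤ n} (λ_i - λ_j + j - i)/(j - i). Then d_λ ≥ (λ₁ + 1)^{n-1} / (2^{n-2} ∏_{1 ≤ i < j ≤ n} (j - i)). -/
open Finset
set_option maxHeartbeats 1000000 in

theorem key_ineq (n : ℕ) (hn : 2 ≤ n) (lam : Fin n → ℤ)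
    (hmono : ∀ i j : Fin n, i ≤ j → lam j ≤ lam i)
    (hlast : lam ⟨n - 1, Nat.sub_lt (lt_of_lt_of_le two_pos hn) Nat.one_pos⟩ = 0) :
    (lam ⟨0, lt_of_lt_of_le two_pos hn⟩ + 1) ^ (n - 1) ≤
      ∏ q ∈ univ.filter (fun q : Fin n × Fin n => q.1 < q.2),
        (lam q.1 - lam q.2 + ((q.2 : ℕ) : ℤ) - ((q.1 : ℕ) : ℤ)) := by
  set a : Fin n := ⟨0, by omega⟩ with ha
  set z : Fin n := ⟨n - 1, by omega⟩ with hz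
  set N : Fin n × Fin n → ℤ := fun q => lam q.1 - lam q.2 + ((q.2 : ℕ) : ℤ) - ((q.1 : ℕ) : ℤ) with hNdef
  set S := univ.filter (fun q : Fin n × Fin n => q.1 < q.2) with hS
  have haz : a < z := by simp [ha, hz, Fin.lt_def]; omega
  have hlam0 : 0 ≤ lam a := hlast ▸ hmono a z haz.le
  have hN1 : ∀ q ∈ S, 1 ≤ N q := by
    intro q hq
    simp only [hS, mem_filter] at hq
    have h1 := hmono q.1 q.2 hq.2.le
    have h2 : (q.1 : ℕ) < (q.2 : ℕ) := hq.2
    simp only [hNdef]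
    omega
  set T : Finset (Fin n × Fin n) :=
    ((Ioo a z).image (fun j => (a, j)) ∪ (Ioo a z).image (fun j => (j, z))) ∪ {(a, z)} with hT
  have hTS : T ⊆ S := by
    intro q hq
    simp only [hT, mem_union, mem_image, mem_singleton, mem_Ioo] at hq
    simp only [hS, mem_filter, mem_univ, true_and]
    rcases hq with (⟨j, hj, rfl⟩ | ⟨j, hj, rfl⟩) | rfl
    · exact hj.1
    · exact hj.2
    · exact haz
  have hone : (1:ℤ) ≤ ∏ q ∈ S \ T, N q := by
    calc (1:ℤ) = ∏ _q ∈ S \ T, 1 := by simp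
      _ ≤ ∏ q ∈ S \ T, N q :=
          Finset.prod_le_prod (fun i _ => zero_le_one) (fun q hq => hN1 q (mem_sdiff.1 hq).1)
  have hTnn : 0 ≤ ∏ q ∈ T, N q :=
    Finset.prod_nonneg fun q hq => le_trans zero_le_one (hN1 q (hTS hq))
  have step1 : ∏ q ∈ T, N q ≤ ∏ q ∈ S, N q := by
    rw [← Finset.prod_sdiff hTS]
    exact le_mul_of_one_le_left hTnn hone
  have hd1 : Disjoint ((Ioo a z).image (fun j => (a, j))) ((Ioo a z).image (fun j => (j, z))) := by
    simp only [disjoint_left, mem_image, mem_Ioo]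
    rintro q ⟨j, hj, rfl⟩ ⟨k, hk, hek⟩
    have : k = a := congrArg Prod.fst hek
    exact absurd (this ▸ hk.1) (lt_irrefl a)
  have hd2 : Disjoint (((Ioo a z).image (fun j => (a, j)) ∪ (Ioo a z).image (fun j => (j, z)))) {(a, z)} := by
    simp only [disjoint_right, mem_union, mem_image, mem_Ioo, mem_singleton]
    rintro q rfl
    rintro (⟨j, hj, hej⟩ | ⟨j, hj, hej⟩)
    · have : j = z := congrArg Prod.snd hej
      exact absurd (this ▸ hj.2) (lt_irrefl z)
    · have : j = a := congrArg Prod.fst hej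
      exact absurd (this ▸ hj.1) (lt_irrefl a)
  have hinj1 : ∀ x ∈ Ioo a z, ∀ y ∈ Ioo a z, (a, x) = (a, y) → x = y := by
    intro x _ y _ h; exact congrArg Prod.snd h
  have hinj2 : ∀ x ∈ Ioo a z, ∀ y ∈ Ioo a z, (x, z) = (y, z) → x = y := by
    intro x _ y _ h; exact congrArg Prod.fst h
  have hTprod : ∏ q ∈ T, N q =
      (∏ j ∈ Ioo a z, (N (a, j) * N (j, z))) * N (a, z) := by
    rw [hT, Finset.prod_union hd2, Finset.prod_union hd1,
        Finset.prod_image hinj1, Finset.prod_image hinj2, Finset.prod_singleton,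
        ← Finset.prod_mul_distrib]
  have hcard : (Ioo a z).card = n - 2 := by
    simp [Fin.card_Ioo, ha, hz]
    omega
  have hpair : ∀ j ∈ Ioo a z, lam a + 1 ≤ N (a, j) * N (j, z) := by
    intro j hj
    simp only [mem_Ioo, Fin.lt_def, ha, hz] at hj
    have hj1 : 1 ≤ ((j : ℕ) : ℤ) := by exact_mod_cast hj.1
    have hj2 : ((j : ℕ) : ℤ) ≤ (n : ℤ) - 2 := by
      have := hj.2; omega
    have hlj0 : 0 ≤ lam j := hlast ▸ hmono j z (by simp [Fin.le_def, hz]; omega)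
    have hlja : lam j ≤ lam a := hmono a j (by simp [Fin.le_def, ha])
    have hzv : ((z : ℕ) : ℤ) = (n : ℤ) - 1 := by
      have : (z : ℕ) = n - 1 := rfl
      omega
    have hav : ((a : ℕ) : ℤ) = 0 := by
      have : (a : ℕ) = 0 := rfl
      omega
    have hNa : N (a, j) = lam a - lam j + ((j : ℕ) : ℤ) := by
      simp only [hNdef]; rw [hav]; ring
    have hNz : N (j, z) = lam j + ((n : ℤ) - 1) - ((j : ℕ) : ℤ) := by
      simp only [hNdef]; rw [hzv, hlast]; ring
    rw [hNa, hNz]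
    nlinarith [mul_nonneg (sub_nonneg.2 hlja) hlj0]
  have step2 : (lam a + 1) ^ (n - 2) * (lam a + 1) ≤ ∏ q ∈ T, N q := by
    rw [hTprod]
    apply mul_le_mul
    · calc (lam a + 1) ^ (n - 2) = ∏ _j ∈ Ioo a z, (lam a + 1) := by
            rw [Finset.prod_const, hcard]
        _ ≤ ∏ j ∈ Ioo a z, (N (a, j) * N (j, z)) :=
            Finset.prod_le_prod (fun j _ => by linarith) hpair
    · have hzv : ((z : ℕ) : ℤ) = (n : ℤ) - 1 := by
        have : (z : ℕ) = n - 1 := rfl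
        omega
      have hav : ((a : ℕ) : ℤ) = 0 := by
        have : (a : ℕ) = 0 := rfl
        omega
      simp only [hNdef]
      rw [hzv, hav, hlast]
      omega
    · linarith
    · exact Finset.prod_nonneg fun j hj => le_trans (by linarith) (hpair j hj)
  have hpow : (lam a + 1) ^ (n - 1) = (lam a + 1) ^ (n - 2) * (lam a + 1) := by
    rw [← pow_succ]
    congr 1
    omega
  rw [hpow]
  exact le_trans step2 step1

/-- For a dominant weight `λ₁ ≥ ⋯ ≥ λ_{n-1} ≥ λₙ = 0` of `SU(n)`, the Weyl
dimension `d_λ = ∏_{i<j} (λ_i - λ_j + j - i)/(j - i)` satisfies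
`d_λ ≥ (λ₁+1)^{n-1} / (2^{n-2} ∏_{i<j} (j-i))`. -/
theorem stmt_8 (n : ℕ) (hn : 2 ≤ n) (lam : Fin n → ℤ)
    (hmono : ∀ i j : Fin n, i ≤ j → lam j ≤ lam i)
    (hlast : lam ⟨n - 1, by omega⟩ = 0) :
    ((lam ⟨0, by omega⟩ : ℝ) + 1) ^ (n - 1) /
        (2 ^ (n - 2) *
          ∏ q ∈ univ.filter (fun q : Fin n × Fin n => q.1 < q.2),
            (((q.2 : ℕ) - (q.1 : ℕ) : ℕ) : ℝ)) ≤
      ∏ q ∈ univ.filter (fun q : Fin n × Fin n => q.1 < q.2),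
        ((lam q.1 - lam q.2 + ((q.2 : ℕ) : ℤ) - ((q.1 : ℕ) : ℤ) : ℤ) : ℝ) /
          (((q.2 : ℕ) - (q.1 : ℕ) : ℕ) : ℝ) := by
  set S := univ.filter (fun q : Fin n × Fin n => q.1 < q.2) with hS
  have hd1 : ∀ q ∈ S, (1:ℝ) ≤ (((q.2 : ℕ) - (q.1 : ℕ) : ℕ) : ℝ) := by
    intro q hq
    simp only [hS, mem_filter] at hq
    have : (q.1 : ℕ) < (q.2 : ℕ) := hq.2
    have h1 : 1 ≤ (q.2 : ℕ) - (q.1 : ℕ) := by omega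
    exact_mod_cast h1
  have hD : 0 < ∏ q ∈ S, (((q.2 : ℕ) - (q.1 : ℕ) : ℕ) : ℝ) :=
    Finset.prod_pos fun q hq => lt_of_lt_of_le one_pos (hd1 q hq)
  have hkey := key_ineq n hn lam hmono hlast
  have hlam0 : (0:ℤ) ≤ lam ⟨0, by omega⟩ := by
    have := hmono ⟨0, by omega⟩ ⟨n - 1, by omega⟩ (by simp [Fin.le_def])
    omega
  have hA : ((lam ⟨0, by omega⟩ : ℝ) + 1) ^ (n - 1) ≤
      ∏ q ∈ S, ((lam q.1 - lam q.2 + ((q.2 : ℕ) : ℤ) - ((q.1 : ℕ) : ℤ) : ℤ) : ℝ) := by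
    calc ((lam ⟨0, by omega⟩ : ℝ) + 1) ^ (n - 1)
        = (((lam ⟨0, by omega⟩ + 1) ^ (n - 1) : ℤ) : ℝ) := by push_cast; ring
      _ ≤ ((∏ q ∈ S, (lam q.1 - lam q.2 + ((q.2 : ℕ) : ℤ) - ((q.1 : ℕ) : ℤ)) : ℤ) : ℝ) := by
          exact_mod_cast hkey
      _ = ∏ q ∈ S, ((lam q.1 - lam q.2 + ((q.2 : ℕ) : ℤ) - ((q.1 : ℕ) : ℤ) : ℤ) : ℝ) := by
          push_cast; rfl
  have hAnn : (0:ℝ) ≤ ((lam ⟨0, by omega⟩ : ℝ) + 1) ^ (n - 1) := by positivity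
  have h2 : (1:ℝ) ≤ 2 ^ (n - 2) := one_le_pow₀ (by norm_num)
  rw [Finset.prod_div_distrib, div_le_div_iff₀ (by positivity) hD]
  have hNnn : (0:ℝ) ≤ ∏ q ∈ S, ((lam q.1 - lam q.2 + ((q.2 : ℕ) : ℤ) - ((q.1 : ℕ) : ℤ) : ℤ) : ℝ) :=
    le_trans hAnn hA
  nlinarith [mul_le_mul_of_nonneg_right hA hD.le, mul_nonneg hNnn hD.le]
end

section
/- For SU(3): let λ = (λ₁, λ₂, 0) and μ = (μ₁, μ₂, 0) be dominant weights, and suppose ν appears in the Littlewood–Richardson decomposition of π_λ ⊗ π_μ, so ν₁ = λ₁+μ₁-α₁-α₂, ν₂ = λ₂+μ₂+α₁-β, ν₃ = α₂+β for nonnegative integers α₁, α₂, β satisfying α₁ ≤ λ₁-λ₂, α₂ ≤ λ₂, α₂+β ≤ λ₂+α₁, α₁+α₂ ≤ μ₁-μ₂+β, β ≤ μ₂, α₂ ≤ μ₁-μ₂. Then with d_λ = (λ₁-λ₂+1)(λ₁+2)(λ₂+1)/2 (and similarly for μ, and d_ν = (ν₁-ν₂+1)(ν₁-ν₃+2)(ν₂-ν₃+1)/2),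 one has d_ν/(d_λ d_μ) ≤ 3. -/
set_option maxHeartbeats 800000

private lemma su3_key (p r s u a1 a2 b : ℤ)
    (hp : 0 ≤ p) (hr : 0 ≤ r) (hs : 0 ≤ s) (hu : 0 ≤ u) (ha1 : 0 ≤ a1) (ha2 : 0 ≤ a2) (hb : 0 ≤ b)
    (c1: a1≤p)(c2:a2≤r)(c3:a2+b≤r+a1)(c4:a1+a2≤ s+b)(c5:b≤u)(_c6:a2≤ s) :
    (p+s+1-2*a1-a2+b)*(r+u+1+a1-a2-2*b) ≤ (p+1)*(r+1)*(s+1)*(u+1) := by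
  nlinarith [mul_nonneg (sub_nonneg.2 c1) (sub_nonneg.2 c5), mul_nonneg (sub_nonneg.2 c2) (sub_nonneg.2 _c6),
    mul_nonneg (sub_nonneg.2 c1) (sub_nonneg.2 c2), mul_nonneg (sub_nonneg.2 c5) (sub_nonneg.2 _c6),
    mul_nonneg ha1 hb, mul_nonneg ha1 ha2, mul_nonneg ha2 hb,
    mul_nonneg (sub_nonneg.2 c3) (sub_nonneg.2 c4),
    mul_nonneg (sub_nonneg.2 c3) hb, mul_nonneg (sub_nonneg.2 c4) ha1,
    mul_nonneg (sub_nonneg.2 c3) (sub_nonneg.2 c5), mul_nonneg (sub_nonneg.2 c4) (sub_nonneg.2 c1),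
    mul_nonneg (mul_nonneg hp hr) (mul_nonneg hs hu), mul_nonneg hp hs, mul_nonneg hr hu]

/-- The `SU(3)` relative dimension estimate: if `ν ⊂ π_λ ⊗ π_μ` appears in the
Littlewood–Richardson decomposition (parametrized by `α₁, α₂, β ≥ 0` subject to
the LR constraints), then `d_ν/(d_λ d_μ) ≤ 3`. -/
theorem stmt_11 (l1 l2 m1 m2 a1 a2 b v1 v2 v3 : ℤ)
    (hl : l1 ≥ l2) (hl2 : l2 ≥ 0) (hm : m1 ≥ m2) (hm2 : m2 ≥ 0)
    (ha1 : 0 ≤ a1) (ha2 : 0 ≤ a2) (hb : 0 ≤ b)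
    (c1 : a1 ≤ l1 - l2) (c2 : a2 ≤ l2) (c3 : a2 + b ≤ l2 + a1)
    (c4 : a1 + a2 ≤ m1 - m2 + b) (c5 : b ≤ m2) (c6 : a2 ≤ m1 - m2)
    (hv1 : v1 = l1 + m1 - a1 - a2) (hv2 : v2 = l2 + m2 + a1 - b)
    (hv3 : v3 = a2 + b) :
    (((v1 - v2 + 1) * (v1 - v3 + 2) * (v2 - v3 + 1) : ℤ) : ℝ) / 2 /
        ((((l1 - l2 + 1) * (l1 + 2) * (l2 + 1) : ℤ) : ℝ) / 2 *
          ((((m1 - m2 + 1) * (m1 + 2) * (m2 + 1) : ℤ) : ℝ) / 2)) ≤ 3 := by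
  subst hv1 hv2 hv3
  -- key integer inequality: 2 * numerator ≤ 3 * denominator product
  have hX : (0:ℤ) ≤ (l1 + m1 - a1 - a2) - (l2 + m2 + a1 - b) + 1 := by linarith
  have hY : (0:ℤ) ≤ (l2 + m2 + a1 - b) - (a2 + b) + 1 := by linarith
  have hkey := su3_key (l1 - l2) l2 (m1 - m2) m2 a1 a2 b (by linarith) hl2 (by linarith) hm2
    ha1 ha2 hb c1 c2 c3 c4 c5 c6
  have hsum : 2 * (((l1 + m1 - a1 - a2) - (a2 + b) + 2)) ≤ (l1 + 2) * (m1 + 2) := by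
    nlinarith [mul_nonneg (by linarith : (0:ℤ) ≤ l1) (by linarith : (0:ℤ) ≤ m1)]
  have hmain : 2 * (((l1 + m1 - a1 - a2) - (l2 + m2 + a1 - b) + 1) *
      ((l1 + m1 - a1 - a2) - (a2 + b) + 2) * ((l2 + m2 + a1 - b) - (a2 + b) + 1)) ≤
      3 * ((l1 - l2 + 1) * (l1 + 2) * (l2 + 1) * ((m1 - m2 + 1) * (m1 + 2) * (m2 + 1))) := by
    have h1 : (((l1 + m1 - a1 - a2) - (l2 + m2 + a1 - b) + 1) *
        ((l2 + m2 + a1 - b) - (a2 + b) + 1)) *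
        (2 * (((l1 + m1 - a1 - a2) - (a2 + b) + 2))) ≤
        ((l1 - l2 + 1) * (l2 + 1) * (m1 - m2 + 1) * (m2 + 1)) * ((l1 + 2) * (m1 + 2)) := by
      apply mul_le_mul (by linarith [hkey]) hsum (by linarith)
      exact mul_nonneg (mul_nonneg (mul_nonneg (by linarith) (by linarith)) (by linarith)) (by linarith)
    have hLM : (0:ℤ) ≤ (l1 - l2 + 1) * (l1 + 2) * (l2 + 1) * ((m1 - m2 + 1) * (m1 + 2) * (m2 + 1)) :=
      mul_nonneg (mul_nonneg (mul_nonneg (by linarith) (by linarith)) (by linarith))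
        (mul_nonneg (mul_nonneg (by linarith) (by linarith)) (by linarith))
    linarith [h1, hLM]
  -- now transfer to ℝ
  have hLpos : (0:ℝ) < (((l1 - l2 + 1) * (l1 + 2) * (l2 + 1) : ℤ) : ℝ) := by
    have : (0:ℤ) < (l1 - l2 + 1) * (l1 + 2) * (l2 + 1) :=
      mul_pos (mul_pos (by linarith) (by linarith)) (by linarith)
    exact_mod_cast this
  have hMpos : (0:ℝ) < (((m1 - m2 + 1) * (m1 + 2) * (m2 + 1) : ℤ) : ℝ) := by
    have : (0:ℤ) < (m1 - m2 + 1) * (m1 + 2) * (m2 + 1) :=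
      mul_pos (mul_pos (by linarith) (by linarith)) (by linarith)
    exact_mod_cast this
  rw [div_le_iff₀ (by positivity : (0:ℝ) < (((l1 - l2 + 1) * (l1 + 2) * (l2 + 1) : ℤ) : ℝ) / 2 *
    ((((m1 - m2 + 1) * (m1 + 2) * (m2 + 1) : ℤ) : ℝ) / 2))]
  have hmainR : 2 * ((((l1 + m1 - a1 - a2) - (l2 + m2 + a1 - b) + 1) *
      ((l1 + m1 - a1 - a2) - (a2 + b) + 2) * ((l2 + m2 + a1 - b) - (a2 + b) + 1) : ℤ) : ℝ) ≤
      3 * ((((l1 - l2 + 1) * (l1 + 2) * (l2 + 1) : ℤ) : ℝ) *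
        (((m1 - m2 + 1) * (m1 + 2) * (m2 + 1) : ℤ) : ℝ)) := by
    exact_mod_cast hmain
  push_cast at hmainR ⊢
  linarith [hmainR]
end

section
/- For nonnegative reals a, b and A with 0 ≤ A ≤ min(a,b), one has (a + b - A + 1)(c + d + A + 1) ≤ 3(a+1)(b+1)(c+1)(d+1) for all nonnegative reals c, d. -/
/-- The key inequality `II' ≤ 3` in the `SU(3)` dimension estimate: for
nonnegative reals `a, b, c, d` and `0 ≤ A ≤ min(a,b)`,
`(a + b - A + 1)(c + d + A + 1) ≤ 3(a+1)(b+1)(c+1)(d+1)`. -/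
theorem stmt_13 (a b c d A : ℝ) (ha : 0 ≤ a) (hb : 0 ≤ b) (hc : 0 ≤ c)
    (hd : 0 ≤ d) (hA0 : 0 ≤ A) (hA : A ≤ min a b) :
    (a + b - A + 1) * (c + d + A + 1) ≤ 3 * ((a + 1) * (b + 1) * (c + 1) * (d + 1)) := by
  have h1 : A ≤ a := le_trans hA (min_le_left a b)
  have h2 : A ≤ b := le_trans hA (min_le_right a b)
  have key : (a + b - A + 1) * (c + d + A + 1) ≤ (a + 1) * (b + 1) * ((c + 1) * (d + 1)) := by
    have step1 : c + d + A + 1 ≤ (A + 1) * ((c + 1) * (d + 1)) := by nlinarith [mul_nonneg hc hd, mul_nonneg hA0 hc, mul_nonneg hA0 hd]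
    have step2 : (a + b - A + 1) * ((A + 1) * ((c + 1) * (d + 1))) ≤ (a + 1) * (b + 1) * ((c + 1) * (d + 1)) := by
      have hcd : (0:ℝ) ≤ (c + 1) * (d + 1) := by positivity
      have : (a + b - A + 1) * (A + 1) ≤ (a + 1) * (b + 1) := by nlinarith [mul_nonneg (sub_nonneg.2 h1) (sub_nonneg.2 h2)]
      nlinarith [hcd]
    calc (a + b - A + 1) * (c + d + A + 1) ≤ (a + b - A + 1) * ((A + 1) * ((c + 1) * (d + 1))) := by
          apply mul_le_mul_of_nonneg_left step1; linarith
      _ ≤ _ := step2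
  nlinarith [mul_nonneg (mul_nonneg (mul_nonneg (by linarith : (0:ℝ) ≤ a+1) (by linarith : (0:ℝ) ≤ b+1)) (by linarith : (0:ℝ) ≤ c+1)) (by linarith : (0:ℝ) ≤ d+1)]
end

section
/- Let 0 < α < 1 and β ≥ max{1, 6/(α(1-α))}. Define p(x) = x^α - β·ln(1+x) for x ≥ 0 and q(x) = p(x)/x for x > 0, and let K = (β²/(α(1-α)))^{1/α}. Then p is increasing on [K, ∞) and q is decreasing on [K, ∞). -/
open Real Set

set_option maxHeartbeats 1600000 in
/-- For `0 < α < 1` and `β ≥ max{1, 6/(α(1-α))}`, the function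
`p(x) = x^α - β ln(1+x)` is increasing, and `q(x) = p(x)/x` is decreasing,
on `[K, ∞)` where `K = (β²/(α(1-α)))^{1/α}`. -/
theorem stmt_14 (α β K : ℝ) (hα0 : 0 < α) (hα1 : α < 1)
    (hβ : max 1 (6 / (α * (1 - α))) ≤ β)
    (hK : K = (β ^ 2 / (α * (1 - α))) ^ (1 / α)) :
    MonotoneOn (fun x : ℝ => x ^ α - β * Real.log (1 + x)) (Set.Ici K) ∧
    AntitoneOn (fun x : ℝ => (x ^ α - β * Real.log (1 + x)) / x) (Set.Ici K) := by
  have h1α : 0 < 1 - α := by linarith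
  have hc : 0 < α * (1 - α) := mul_pos hα0 h1α
  have hβ1 : (1:ℝ) ≤ β := le_trans (le_max_left _ _) hβ
  have hβ0 : (0:ℝ) < β := by linarith
  have hβ6 : 6 / (α * (1 - α)) ≤ β := le_trans (le_max_right _ _) hβ
  have hc4 : α * (1 - α) ≤ 1/4 := by nlinarith [sq_nonneg (α - 1/2)]
  have hβ24 : (24:ℝ) ≤ β := by
    refine le_trans ?_ hβ6
    rw [le_div_iff₀ hc]; linarith
  have hbc : 6 ≤ β * (α * (1 - α)) := by
    have := (div_le_iff₀ hc).mp hβ6; linarith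
  have hq0 : (0:ℝ) < β ^ 2 / (α * (1 - α)) := by positivity
  have hK0 : 0 < K := by rw [hK]; exact Real.rpow_pos_of_pos hq0 _
  have hKα : K ^ α = β ^ 2 / (α * (1 - α)) := by
    rw [hK, ← Real.rpow_mul hq0.le, one_div, inv_mul_cancel₀ hα0.ne', Real.rpow_one]
  have hK1 : 1 ≤ K := by
    have h1 : (1:ℝ) ≤ β ^ 2 / (α * (1 - α)) := by
      rw [le_div_iff₀ hc]; nlinarith
    rw [hK]
    exact Real.one_le_rpow h1 (by positivity)
  -- derivative of p
  have hp : ∀ x : ℝ, 0 < x → HasDerivAt (fun x : ℝ => x ^ α - β * Real.log (1 + x))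
      (α * x ^ (α - 1) - β * (1 / (1 + x))) x := by
    intro x hx0
    have h1x : (0:ℝ) < 1 + x := by linarith
    exact (Real.hasDerivAt_rpow_const (Or.inl hx0.ne')).sub
      ((((hasDerivAt_id x).const_add 1).log h1x.ne').const_mul β)
  -- basic facts for x ≥ K
  have hfacts : ∀ x : ℝ, K ≤ x → 0 < x ∧ β ^ 2 ≤ (α * (1 - α)) * x ^ α ∧
      x ^ α ≤ x ^ (α - 1) * (1 + x) ∧ x ^ (α - 1) * x = x ^ α := by
    intro x hxK
    have hx0 : 0 < x := lt_of_lt_of_le hK0 hxK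
    have hxa : K ^ α ≤ x ^ α := Real.rpow_le_rpow hK0.le hxK hα0.le
    have h2 : β ^ 2 ≤ (α * (1 - α)) * x ^ α := by
      rw [hKα, div_le_iff₀ hc] at hxa; linarith
    have hxx : x ^ (α - 1) * x = x ^ α := by
      rw [← Real.rpow_add_one hx0.ne']; norm_num
    have hpos : 0 < x ^ (α - 1) := Real.rpow_pos_of_pos hx0 _
    exact ⟨hx0, h2, by nlinarith, hxx⟩
  -- g(x) = (1-α) x^α - β log(1+x) is monotone on [K,∞)
  have hg' : ∀ x : ℝ, 0 < x → HasDerivAt (fun x : ℝ => (1 - α) * x ^ α - β * Real.log (1 + x))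
      ((1 - α) * (α * x ^ (α - 1)) - β * (1 / (1 + x))) x := by
    intro x hx0
    have h1x : (0:ℝ) < 1 + x := by linarith
    exact ((Real.hasDerivAt_rpow_const (Or.inl hx0.ne')).const_mul (1 - α)).sub
      ((((hasDerivAt_id x).const_add 1).log h1x.ne').const_mul β)
  have hgmono : MonotoneOn (fun x : ℝ => (1 - α) * x ^ α - β * Real.log (1 + x)) (Set.Ici K) := by
    apply monotoneOn_of_deriv_nonneg (convex_Ici K)
    · intro x hx
      exact ((hg' x (lt_of_lt_of_le hK0 hx)).continuousAt).continuousWithinAt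
    · rw [interior_Ici]
      intro x hx
      exact ((hg' x (lt_of_lt_of_le hK0 (le_of_lt hx))).differentiableAt).differentiableWithinAt
    · rw [interior_Ici]
      intro x hx
      have hxK : K ≤ x := le_of_lt hx
      obtain ⟨hx0, h2, h3, h4⟩ := hfacts x hxK
      rw [(hg' x hx0).deriv]
      have h1x : (0:ℝ) < 1 + x := by linarith
      rw [sub_nonneg, mul_one_div, div_le_iff₀ h1x]
      have hpos : 0 < x ^ (α - 1) := Real.rpow_pos_of_pos hx0 _
      nlinarith
  -- g(K) ≥ 0
  have hgK : 0 ≤ (1 - α) * K ^ α - β * Real.log (1 + K) := by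
    have hlog2 : Real.log 2 < 0.6931471808 := Real.log_two_lt_d9
    have hlog2' : 0 < Real.log 2 := Real.log_pos (by norm_num)
    have l1 : Real.log (1 + K) ≤ Real.log 2 + Real.log K := by
      rw [← Real.log_mul (by norm_num) hK0.ne']
      exact Real.log_le_log (by linarith) (by linarith)
    have l2 : α * Real.log K = Real.log (β ^ 2 / (α * (1 - α))) := by
      rw [← Real.log_rpow hK0, hKα]
    have l3 : Real.log (β ^ 2 / (α * (1 - α))) = 2 * Real.log β - Real.log (α * (1 - α)) := by
      rw [Real.log_div (by positivity) hc.ne', Real.log_pow]; push_cast; ring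
    have l4 : Real.log 6 - Real.log β ≤ Real.log (α * (1 - α)) := by
      have h6β : 6 / β ≤ α * (1 - α) := by rw [div_le_iff₀ hβ0]; linarith
      have := Real.log_le_log (by positivity) h6β
      rwa [Real.log_div (by norm_num) hβ0.ne'] at this
    have l5 : Real.log β ≤ β / 8 - 1 + 3 * Real.log 2 := by
      have h8 : Real.log β = Real.log (β / 8) + Real.log 8 := by
        rw [← Real.log_mul (by positivity) (by norm_num)]
        norm_num
      have h9 : Real.log (β / 8) ≤ β / 8 - 1 :=
        Real.log_le_sub_one_of_pos (by positivity)
      have h10 : Real.log 8 = 3 * Real.log 2 := by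
        rw [show (8:ℝ) = 2 ^ 3 by norm_num, Real.log_pow]; push_cast; ring
      linarith
    have l6 : (1:ℝ) ≤ Real.log 6 := by
      have : Real.log 6 = Real.log 2 + Real.log 3 := by
        rw [← Real.log_mul (by norm_num) (by norm_num)]; norm_num
      have h3 : Real.log 2 < Real.log 3 := Real.log_lt_log (by norm_num) (by norm_num)
      nlinarith [Real.log_two_gt_d9]
    -- α * log(1+K) ≤ β
    have key : α * Real.log (1 + K) ≤ β := by
      have hlogK : 0 ≤ Real.log K := Real.log_nonneg hK1
      have s1 : α * Real.log (1 + K) ≤ α * Real.log 2 + α * Real.log K := by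
        nlinarith [mul_le_mul_of_nonneg_left l1 hα0.le]
      have s2 : α * Real.log 2 ≤ Real.log 2 := by nlinarith
      rw [l2, l3] at s1
      linarith
    have hlK : 0 ≤ Real.log (1 + K) := Real.log_nonneg (by linarith)
    have hfin : β * Real.log (1 + K) ≤ β ^ 2 / α := by
      rw [le_div_iff₀ hα0]
      nlinarith [mul_le_mul_of_nonneg_left key hβ0.le]
    have hKβ : (1 - α) * K ^ α = β ^ 2 / α := by
      rw [hKα]; field_simp
    rw [hKβ]
    linarith
  have hgnn : ∀ x : ℝ, K ≤ x → β * Real.log (1 + x) ≤ (1 - α) * x ^ α := by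
    intro x hxK
    have := hgmono self_mem_Ici hxK hxK
    simp only at this
    linarith
  constructor
  · -- p monotone
    apply monotoneOn_of_deriv_nonneg (convex_Ici K)
    · intro x hx
      exact ((hp x (lt_of_lt_of_le hK0 hx)).continuousAt).continuousWithinAt
    · rw [interior_Ici]
      intro x hx
      exact ((hp x (lt_of_lt_of_le hK0 (le_of_lt hx))).differentiableAt).differentiableWithinAt
    · rw [interior_Ici]
      intro x hx
      have hxK : K ≤ x := le_of_lt hx
      obtain ⟨hx0, h2, h3, h4⟩ := hfacts x hxK
      rw [(hp x hx0).deriv]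
      have h1x : (0:ℝ) < 1 + x := by linarith
      rw [sub_nonneg, mul_one_div, div_le_iff₀ h1x]
      have hpos : 0 < x ^ (α - 1) := Real.rpow_pos_of_pos hx0 _
      nlinarith
  · -- q antitone
    apply antitoneOn_of_deriv_nonpos (convex_Ici K)
    · intro x hx
      have hx0 : 0 < x := lt_of_lt_of_le hK0 hx
      exact (((hp x hx0).div (hasDerivAt_id x) hx0.ne').continuousAt).continuousWithinAt
    · rw [interior_Ici]
      intro x hx
      have hx0 : 0 < x := lt_of_lt_of_le hK0 (le_of_lt hx)
      exact (((hp x hx0).div (hasDerivAt_id x) hx0.ne').differentiableAt).differentiableWithinAt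
    · rw [interior_Ici]
      intro x hx
      have hxK : K ≤ x := le_of_lt hx
      obtain ⟨hx0, h2, h3, h4⟩ := hfacts x hxK
      have hder : HasDerivAt (fun x : ℝ => (x ^ α - β * Real.log (1 + x)) / x)
          (((α * x ^ (α - 1) - β * (1 / (1 + x))) * x - (x ^ α - β * Real.log (1 + x)) * 1) / x ^ 2)
          x := (hp x hx0).div (hasDerivAt_id x) hx0.ne'
      rw [hder.deriv]
      apply div_nonpos_of_nonpos_of_nonneg _ (sq_nonneg x)
      have h1x : (0:ℝ) < 1 + x := by linarith
      have hgx := hgnn x hxK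
      have hfrac : 0 ≤ β * (x / (1 + x)) := by positivity
      have expand : (α * x ^ (α - 1) - β * (1 / (1 + x))) * x = α * x ^ α - β * (x / (1 + x)) := by
        have e1 : (α * x ^ (α - 1) - β * (1 / (1 + x))) * x
            = α * (x ^ (α - 1) * x) - β * (x / (1 + x)) := by ring
        rw [e1, h4]
      rw [expand]
      nlinarith
end

section
/- Let 0 < α < 1, β ≥ max{1, 6/(α(1-α))}, p(x) = x^α - β ln(1+x), q(x) = p(x)/x, K = (β²/(α(1-α)))^{1/α}. Let τ : S → [0,∞) be a function on a set S with a 'subadditivity relation': whenever σ is related to the pair (π, π'), τ(σ) ≤ τ(π) + τ(π'). Define ω(π) = e^{p(τ(π))} and M = max{ e^{p(t)-p(s)-p(r)} : t, s, r ∈ [0, 2K] ∩ ℤ }. Then for all related triples, ω(σ) ≤ M² ω(π) ω(π'). -/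
set_option maxHeartbeats 1000000
section Helpers
open Real Set

private lemma lem_ber {α : ℝ} (hα0 : 0 ≤ α) (hα1 : α ≤ 1) {x y : ℝ} (hx : 1 ≤ x) (hy : 0 ≤ y) :
    (x + y) ^ α ≤ x ^ α + α * x ^ (α - 1) * y := by
  have hx0 : (0:ℝ) < x := lt_of_lt_of_le one_pos hx
  have h1 : x + y = x * (1 + y / x) := by field_simp
  have h2 : (x * (1 + y / x)) ^ α = x ^ α * (1 + y / x) ^ α :=
    Real.mul_rpow hx0.le (by positivity)
  have h3 : (1 + y / x) ^ α ≤ 1 + α * (y / x) := by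
    have := rpow_one_add_le_one_add_mul_self (s := y / x)
      (le_trans (by norm_num) (by positivity : (0:ℝ) ≤ y / x)) hα0 hα1
    linarith [this]
  have h5 : x ^ (α - 1) = x ^ α / x := by rw [Real.rpow_sub hx0, Real.rpow_one]
  calc (x + y) ^ α = x ^ α * (1 + y / x) ^ α := by rw [h1, h2]
    _ ≤ x ^ α * (1 + α * (y / x)) := by
        apply mul_le_mul_of_nonneg_left h3 (by positivity)
    _ = x ^ α + α * x ^ (α - 1) * y := by rw [h5]; field_simp

private lemma lem_sub1 {α : ℝ} (hα0 : 0 < α) (hα1 : α < 1) {x : ℝ} (hx : 0 ≤ x) :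
    (x + 1) ^ α ≤ x ^ α + 1 := by
  rcases le_or_gt 1 x with h | h
  · have hb : (x + 1) ^ α ≤ x ^ α + α * x ^ (α - 1) * 1 :=
      lem_ber hα0.le hα1.le h zero_le_one
    have h1 : x ^ (α - 1) ≤ 1 :=
      Real.rpow_le_one_of_one_le_of_nonpos h (by linarith)
    nlinarith [h1, hα0.le]
  · rcases eq_or_lt_of_le hx with h0 | h0
    · rw [← h0]; simp [Real.zero_rpow (ne_of_gt hα0)]
    · have h1 : (x + 1) ^ α ≤ (x + 1) ^ (1:ℝ) := by
        apply Real.rpow_le_rpow_of_exponent_le (by linarith) hα1.le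
      rw [Real.rpow_one] at h1
      have h2 : x ^ (1:ℝ) ≤ x ^ α :=
        Real.rpow_le_rpow_of_exponent_ge h0 h.le hα1.le
      rw [Real.rpow_one] at h2
      linarith

private lemma lem_3log {β : ℝ} (hβ : 24 ≤ β) : 3 * Real.log β ≤ β := by
  have hβ0 : (0:ℝ) < β := by linarith
  have ht2 : (Real.sqrt β) ^ 2 = β := Real.sq_sqrt hβ0.le
  have ht0 : 0 ≤ Real.sqrt β := Real.sqrt_nonneg β
  have hlog : Real.log β = 2 * Real.log (Real.sqrt β) := by
    rw [Real.log_sqrt hβ0.le]; ring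
  have h1 : Real.log (Real.sqrt β) ≤ Real.sqrt β - 1 :=
    Real.log_le_sub_one_of_pos (by nlinarith)
  nlinarith [sq_nonneg (Real.sqrt β - 5)]

private lemma lem_mono {α β K : ℝ} (hα0 : 0 < α) (hα1 : α < 1) (hβ1 : 1 ≤ β)
    (hK1 : 1 ≤ K) (hKα : β ^ 2 / (α * (1 - α)) ≤ K ^ α) :
    MonotoneOn (fun x : ℝ => x ^ α - β * Real.log (1 + x)) (Set.Ici K) := by
  have hK0 : (0:ℝ) < K := lt_of_lt_of_le one_pos hK1
  have hc : 0 < α * (1 - α) := by nlinarith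
  have hder : ∀ x ∈ interior (Set.Ici K),
      HasDerivAt (fun x : ℝ => x ^ α - β * Real.log (1 + x))
        (α * x ^ (α - 1) - β * (1 / (1 + x))) x := by
    intro x hx
    rw [interior_Ici] at hx
    have hx0 : (0:ℝ) < x := lt_trans hK0 hx
    have h1 : HasDerivAt (fun x : ℝ => x ^ α) (α * x ^ (α - 1)) x :=
      Real.hasDerivAt_rpow_const (Or.inl (ne_of_gt hx0))
    have h2 : HasDerivAt (fun x : ℝ => Real.log (1 + x)) (1 / (1 + x)) x := by
      have := ((hasDerivAt_id x).const_add 1).log (by positivity)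
      simpa using this
    exact h1.sub (h2.const_mul β)
  apply monotoneOn_of_deriv_nonneg (convex_Ici K)
  · apply ContinuousOn.sub
    · exact ContinuousOn.rpow_const continuousOn_id
        (fun x hx => Or.inl (ne_of_gt (lt_of_lt_of_le hK0 hx)))
    · apply continuousOn_const.mul
      apply ContinuousOn.log (continuousOn_const.add continuousOn_id)
      intro x hx
      have hx' : K ≤ x := hx
      exact ne_of_gt (by change (0:ℝ) < 1 + x; linarith)
  · intro x hx
    exact (hder x hx).differentiableAt.differentiableWithinAt
  · intro x hx
    rw [(hder x hx).deriv]
    rw [interior_Ici] at hx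
    have hx0 : (0:ℝ) < x := lt_trans hK0 hx
    have hxa : x ^ (α - 1) * x = x ^ α := by
      rw [Real.rpow_sub hx0, Real.rpow_one, div_mul_cancel₀ _ (ne_of_gt hx0)]
    have hKx : K ^ α ≤ x ^ α := Real.rpow_le_rpow hK0.le hx.le hα0.le
    have he : α * (β ^ 2 / (α * (1 - α))) = β ^ 2 / (1 - α) := by
      have hne1 : α ≠ 0 := ne_of_gt hα0
      have hne2 : (1:ℝ) - α ≠ 0 := by linarith
      field_simp
    have h2 : β ≤ β ^ 2 / (1 - α) := by
      rw [le_div_iff₀ (by linarith : (0:ℝ) < 1 - α)]; nlinarith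
    have hβK : β ≤ α * x ^ α := by
      calc β ≤ β ^ 2 / (1 - α) := h2
        _ = α * (β ^ 2 / (α * (1 - α))) := he.symm
        _ ≤ α * (K ^ α) := mul_le_mul_of_nonneg_left hKα hα0.le
        _ ≤ α * x ^ α := mul_le_mul_of_nonneg_left hKx hα0.le
    have hpos : 0 ≤ x ^ (α - 1) := Real.rpow_nonneg hx0.le _
    rw [sub_nonneg, mul_one_div, div_le_iff₀ (by linarith : (0:ℝ) < 1 + x)]
    nlinarith [mul_nonneg hα0.le hpos]

private lemma lem_KC {α β K : ℝ} (hα0 : 0 < α) (hα1 : α < 1) (hβ24 : 24 ≤ β)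
    (hβc : 6 / (α * (1 - α)) ≤ β) (hK1 : 1 ≤ K)
    (hKα : K ^ α = β ^ 2 / (α * (1 - α))) :
    ∀ x : ℝ, K ≤ x → β * Real.log (1 + x) ≤ (1 - α) * x ^ α := by
  intro x hx
  have hc : 0 < α * (1 - α) := by nlinarith
  have hβ0 : (0:ℝ) < β := by linarith
  have hx1 : (1:ℝ) ≤ x := le_trans hK1 hx
  have hx0 : (0:ℝ) < x := by linarith
  have hK0 : (0:ℝ) < K := by linarith
  set u := x ^ α with hu_def
  set u₀ := β ^ 2 / (α * (1 - α)) with hu0_def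
  have hu0pos : 0 < u₀ := by positivity
  have hu : u₀ ≤ u := by
    rw [← hKα]; exact Real.rpow_le_rpow hK0.le hx hα0.le
  have hupos : 0 < u := lt_of_lt_of_le hu0pos hu
  have hA : β * Real.log (1 + x) ≤ β * Real.log 2 + (β / α) * Real.log u := by
    have h1 : Real.log (1 + x) ≤ Real.log (2 * x) := by
      apply Real.log_le_log (by linarith)
      linarith
    have h2 : Real.log (2 * x) = Real.log 2 + Real.log x :=
      Real.log_mul two_ne_zero (ne_of_gt hx0)
    have h3 : Real.log u = α * Real.log x := Real.log_rpow hx0 α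
    have h4 : (β / α) * Real.log u = β * Real.log x := by
      rw [h3]; field_simp
    nlinarith [h1, h2, h4]
  have hB : Real.log u ≤ Real.log u₀ + (u - u₀) / u₀ := by
    have h1 : Real.log u - Real.log u₀ = Real.log (u / u₀) :=
      (Real.log_div (ne_of_gt hupos) (ne_of_gt hu0pos)).symm
    have h2 : Real.log (u / u₀) ≤ u / u₀ - 1 :=
      Real.log_le_sub_one_of_pos (by positivity)
    have h3 : u / u₀ - 1 = (u - u₀) / u₀ := by field_simp
    linarith
  have step5 : α * Real.log 2 + Real.log u₀ ≤ β := by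
    have h6 : u₀ ≤ β ^ 3 / 6 := by
      rw [hu0_def, div_le_div_iff₀ hc (by norm_num)]
      have h7 : 6 ≤ β * (α * (1 - α)) := by
        rw [div_le_iff₀ hc] at hβc; linarith
      nlinarith [sq_nonneg β]
    have h8 : Real.log u₀ ≤ Real.log (β ^ 3 / 6) := Real.log_le_log hu0pos h6
    have h9 : Real.log (β ^ 3 / 6) = 3 * Real.log β - Real.log 6 := by
      rw [Real.log_div (by positivity) (by norm_num), Real.log_pow]
      norm_num
    have h10 : 3 * Real.log β ≤ β := lem_3log hβ24
    have h11 : Real.log 2 ≤ Real.log 6 := Real.log_le_log (by norm_num) (by norm_num)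
    have h12 : (0:ℝ) ≤ Real.log 2 := Real.log_nonneg (by norm_num)
    nlinarith [h8, h9, h10, h11, h12]
  have hC : (β / α) * ((u - u₀) / u₀) ≤ (1 - α) * (u - u₀) := by
    have he : (β / α) * ((u - u₀) / u₀) = ((1 - α) / β) * (u - u₀) := by
      rw [hu0_def]; field_simp
    rw [he]
    apply mul_le_mul_of_nonneg_right _ (by linarith)
    rw [div_le_iff₀ hβ0]; nlinarith
  have hD : β * Real.log 2 + (β / α) * Real.log u₀ ≤ (1 - α) * u₀ := by
    have h5' : β * (α * Real.log 2 + Real.log u₀) ≤ β * β :=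
      mul_le_mul_of_nonneg_left step5 hβ0.le
    have he1 : β * Real.log 2 + (β / α) * Real.log u₀
        = (β * (α * Real.log 2 + Real.log u₀)) / α := by field_simp
    have he2 : (1 - α) * u₀ = (β * β) / α := by
      have h1α : (1:ℝ) - α ≠ 0 := by linarith
      rw [hu0_def, mul_div_assoc', mul_comm α (1 - α), ← div_div, mul_div_cancel_left₀ _ h1α, sq]
    rw [he1, he2]
    gcongr
  have hB' : (β / α) * Real.log u ≤ (β / α) * Real.log u₀ + (β / α) * ((u - u₀) / u₀) := by
    have := mul_le_mul_of_nonneg_left hB (by positivity : (0:ℝ) ≤ β / α)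
    rw [mul_add] at this; exact this
  linarith [hA, hB', hC, hD]

private lemma lem_main {α β K M : ℝ} (hα0 : 0 < α) (hα1 : α < 1)
    (hβ : max 1 (6 / (α * (1 - α))) ≤ β)
    (p : ℝ → ℝ) (hp : ∀ x, p x = x ^ α - β * Real.log (1 + x))
    (hK : K = (β ^ 2 / (α * (1 - α))) ^ (1 / α))
    (hM : M = sSup {y : ℝ | ∃ t s r : ℤ, 0 ≤ t ∧ (t : ℝ) ≤ 2 * K ∧
      0 ≤ s ∧ (s : ℝ) ≤ 2 * K ∧ 0 ≤ r ∧ (r : ℝ) ≤ 2 * K ∧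
      y = Real.exp (p t - p s - p r)}) :
    ∀ t s r : ℝ, 0 ≤ t → 0 ≤ s → 0 ≤ r → t ≤ s + r →
      Real.exp (p t) ≤ M ^ 2 * Real.exp (p s) * Real.exp (p r) := by
  have hc : 0 < α * (1 - α) := by nlinarith
  have hβc : 6 / (α * (1 - α)) ≤ β := le_trans (le_max_right _ _) hβ
  have hβ24 : (24:ℝ) ≤ β := by
    refine le_trans ?_ hβc
    rw [le_div_iff₀ hc]
    nlinarith [sq_nonneg (2 * α - 1)]
  have hβ1 : (1:ℝ) ≤ β := by linarith
  have hβ0 : (0:ℝ) < β := by linarith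
  have hKα : K ^ α = β ^ 2 / (α * (1 - α)) := by
    rw [hK, one_div, Real.rpow_inv_rpow (by positivity) (ne_of_gt hα0)]
  have hK0 : (0:ℝ) < K := by rw [hK]; positivity
  have hKαval : β ^ 2 ≤ K ^ α := by
    rw [hKα, le_div_iff₀ hc]; nlinarith [sq_nonneg (2 * α - 1), sq_nonneg β]
  have hK1 : (1:ℝ) ≤ K := by
    by_contra h
    push_neg at h
    have := Real.rpow_le_one hK0.le h.le hα0.le
    nlinarith
  have hK2 : (2:ℝ) ≤ K := by
    have h1 : K ^ α ≤ K := by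
      calc K ^ α ≤ K ^ (1:ℝ) := Real.rpow_le_rpow_of_exponent_le hK1 hα1.le
        _ = K := Real.rpow_one K
    nlinarith
  have hlog2_0 : (0:ℝ) ≤ Real.log 2 := Real.log_nonneg (by norm_num)
  have hlog2_1 : Real.log 2 ≤ 1 := by
    have := Real.log_le_sub_one_of_pos (show (0:ℝ) < 2 by norm_num); linarith
  -- monotone, p-version
  have hmono : ∀ x y : ℝ, K ≤ x → x ≤ y → p x ≤ p y := by
    intro x y hx hxy
    rw [hp x, hp y]
    exact lem_mono hα0 hα1 hβ1 hK1 (le_of_eq hKα.symm)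
      (Set.mem_Ici.mpr hx) (Set.mem_Ici.mpr (le_trans hx hxy)) hxy
  have hKC : ∀ x : ℝ, K ≤ x → β * Real.log (1 + x) ≤ (1 - α) * x ^ α :=
    lem_KC hα0 hα1 hβ24 hβc hK1 hKα
  -- lower bound for p on [K,∞)
  have hPge : ∀ x : ℝ, K ≤ x → β ^ 2 ≤ p x := by
    intro x hx
    rw [hp x]
    have h1 := hKC x hx
    have h2 : K ^ α ≤ x ^ α := Real.rpow_le_rpow hK0.le hx hα0.le
    have h4 : α * K ^ α ≤ α * x ^ α := mul_le_mul_of_nonneg_left h2 hα0.le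
    have h5 : α * K ^ α = β ^ 2 / (1 - α) := by
      rw [hKα]
      have hne1 : α ≠ 0 := ne_of_gt hα0
      have hne2 : (1:ℝ) - α ≠ 0 := by linarith
      field_simp
    have h6 : β ^ 2 ≤ β ^ 2 / (1 - α) := by
      rw [le_div_iff₀ (by linarith : (0:ℝ) < 1 - α)]; nlinarith
    nlinarith [h1, h4, h5, h6]
  -- subadditivity on [K,∞)
  have hSA : ∀ x y : ℝ, K ≤ x → K ≤ y → p (x + y) ≤ p x + p y := by
    have haux : ∀ x y : ℝ, K ≤ y → y ≤ x → p (x + y) ≤ p x + p y := by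
      intro x y hy hyx
      have hx : K ≤ x := le_trans hy hyx
      have hx1 : (1:ℝ) ≤ x := le_trans hK1 hx
      have hy1 : (1:ℝ) ≤ y := le_trans hK1 hy
      have hy0 : (0:ℝ) < y := by linarith
      rw [hp (x + y), hp x, hp y]
      have hb := lem_ber hα0.le hα1.le hx1 (le_of_lt hy0)
      have hxy : x ^ (α - 1) ≤ y ^ (α - 1) :=
        Real.rpow_le_rpow_of_nonpos hy0 hyx (by linarith)
      have hyy : y ^ (α - 1) * y = y ^ α := by
        rw [Real.rpow_sub hy0, Real.rpow_one, div_mul_cancel₀ _ (ne_of_gt hy0)]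
      have hay : α * x ^ (α - 1) * y ≤ α * y ^ α := by
        have h1 : α * x ^ (α - 1) * y ≤ α * y ^ (α - 1) * y :=
          mul_le_mul_of_nonneg_right (mul_le_mul_of_nonneg_left hxy hα0.le) hy0.le
        have h2 : α * y ^ (α - 1) * y = α * y ^ α := by rw [mul_assoc, hyy]
        linarith
      have hlogx : Real.log (1 + x) ≤ Real.log (1 + (x + y)) :=
        Real.log_le_log (by linarith) (by linarith)
      have hKCy := hKC y hy
      have hβlogx := mul_le_mul_of_nonneg_left hlogx hβ0.le
      nlinarith [hb, hay, hβlogx, hKCy]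
    intro x y hx hy
    rcases le_total y x with h | h
    · exact haux x y hy h
    · have h2 := haux y x hx h
      rw [add_comm x y]; linarith
  -- rounding
  have hround_up : ∀ x : ℝ, 0 ≤ x → p x ≤ p ((⌊x⌋ : ℤ) : ℝ) + 1 := by
    intro x hx0
    have hn0 : (0:ℝ) ≤ ((⌊x⌋ : ℤ) : ℝ) := by
      have := Int.floor_nonneg.mpr hx0; exact_mod_cast this
    have hnx : ((⌊x⌋ : ℤ) : ℝ) ≤ x := Int.floor_le x
    have hxn : x < ((⌊x⌋ : ℤ) : ℝ) + 1 := Int.lt_floor_add_one x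
    rw [hp x, hp _]
    have h1 : x ^ α ≤ (((⌊x⌋ : ℤ) : ℝ) + 1) ^ α :=
      Real.rpow_le_rpow hx0 (by linarith) hα0.le
    have h2 := lem_sub1 hα0 hα1 hn0
    have h3 : Real.log (1 + ((⌊x⌋ : ℤ) : ℝ)) ≤ Real.log (1 + x) :=
      Real.log_le_log (by linarith) (by linarith)
    have h4 := mul_le_mul_of_nonneg_left h3 hβ0.le
    linarith
  have hround_down : ∀ x : ℝ, 0 ≤ x → p ((⌊x⌋ : ℤ) : ℝ) ≤ p x + β * Real.log 2 := by
    intro x hx0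
    have hn0 : (0:ℝ) ≤ ((⌊x⌋ : ℤ) : ℝ) := by
      have := Int.floor_nonneg.mpr hx0; exact_mod_cast this
    have hnx : ((⌊x⌋ : ℤ) : ℝ) ≤ x := Int.floor_le x
    have hxn : x < ((⌊x⌋ : ℤ) : ℝ) + 1 := Int.lt_floor_add_one x
    rw [hp x, hp _]
    have h1 : ((⌊x⌋ : ℤ) : ℝ) ^ α ≤ x ^ α := Real.rpow_le_rpow hn0 hnx hα0.le
    have h2 : Real.log (1 + x) ≤ Real.log 2 + Real.log (1 + ((⌊x⌋ : ℤ) : ℝ)) := by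
      have ha : (1:ℝ) + x ≤ 2 * (1 + ((⌊x⌋ : ℤ) : ℝ)) := by linarith
      have hb : Real.log (1 + x) ≤ Real.log (2 * (1 + ((⌊x⌋ : ℤ) : ℝ))) :=
        Real.log_le_log (by linarith) ha
      have hcc : Real.log (2 * (1 + ((⌊x⌋ : ℤ) : ℝ))) =
          Real.log 2 + Real.log (1 + ((⌊x⌋ : ℤ) : ℝ)) :=
        Real.log_mul two_ne_zero (by positivity)
      linarith
    have h4 := mul_le_mul_of_nonneg_left h2 hβ0.le
    linarith
  -- facts about M
  have hbdd : BddAbove {y : ℝ | ∃ t s r : ℤ, 0 ≤ t ∧ (t : ℝ) ≤ 2 * K ∧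
      0 ≤ s ∧ (s : ℝ) ≤ 2 * K ∧ 0 ≤ r ∧ (r : ℝ) ≤ 2 * K ∧
      y = Real.exp (p t - p s - p r)} := by
    have hfin : Set.Finite ((fun z : ℤ × ℤ × ℤ => Real.exp (p z.1 - p z.2.1 - p z.2.2)) ''
        (Set.Icc 0 ⌊2 * K⌋ ×ˢ Set.Icc 0 ⌊2 * K⌋ ×ˢ Set.Icc 0 ⌊2 * K⌋)) :=
      Set.Finite.image _ (((Set.finite_Icc _ _).prod ((Set.finite_Icc _ _).prod
        (Set.finite_Icc _ _))))
    apply BddAbove.mono _ hfin.bddAbove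
    rintro y ⟨a, b, c, h1, h2, h3, h4, h5, h6, rfl⟩
    exact ⟨(a, b, c), ⟨⟨h1, Int.le_floor.mpr h2⟩, ⟨h3, Int.le_floor.mpr h4⟩,
      ⟨h5, Int.le_floor.mpr h6⟩⟩, rfl⟩
  have hMmem : ∀ a b c : ℤ, 0 ≤ a → (a : ℝ) ≤ 2 * K → 0 ≤ b → (b : ℝ) ≤ 2 * K →
      0 ≤ c → (c : ℝ) ≤ 2 * K → Real.exp (p a - p b - p c) ≤ M := by
    intro a b c h1 h2 h3 h4 h5 h6
    rw [hM]
    exact le_csSup hbdd ⟨a, b, c, h1, h2, h3, h4, h5, h6, rfl⟩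
  have hp0 : p ((0 : ℤ) : ℝ) = 0 := by
    rw [hp]
    push_cast
    rw [Real.zero_rpow (ne_of_gt hα0)]
    norm_num
  have hM1 : (1:ℝ) ≤ M := by
    have h := hMmem 0 0 0 le_rfl (by push_cast; linarith) le_rfl
      (by push_cast; linarith) le_rfl (by push_cast; linarith)
    rw [hp0] at h
    norm_num at h
    exact h
  have hMpos : (0:ℝ) < M := by linarith
  have hlogle : ∀ a b c : ℤ, 0 ≤ a → (a : ℝ) ≤ 2 * K → 0 ≤ b → (b : ℝ) ≤ 2 * K →
      0 ≤ c → (c : ℝ) ≤ 2 * K → p a - p b - p c ≤ Real.log M := by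
    intro a b c h1 h2 h3 h4 h5 h6
    exact (Real.le_log_iff_exp_le hMpos).mpr (hMmem a b c h1 h2 h3 h4 h5 h6)
  have hlogM0 : 0 ≤ Real.log M := Real.log_nonneg hM1
  have hp1 : p ((1 : ℤ) : ℝ) = 1 - β * Real.log 2 := by
    rw [hp]; push_cast; rw [Real.one_rpow]; norm_num
  have hp2 : p ((2 : ℤ) : ℝ) = 2 ^ α - β * Real.log 3 := by
    rw [hp]; push_cast; norm_num
  have h2α : (2:ℝ) ^ α ≤ 2 := by
    calc (2:ℝ) ^ α ≤ (2:ℝ) ^ (1:ℝ) := Real.rpow_le_rpow_of_exponent_le one_le_two hα1.le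
      _ = 2 := Real.rpow_one 2
  have hlog32 : Real.log 2 + 1/3 ≤ Real.log 3 := by
    have h := Real.log_le_sub_one_of_pos (show (0:ℝ) < 2/3 by norm_num)
    have h2 : Real.log ((2:ℝ)/3) = Real.log 2 - Real.log 3 :=
      Real.log_div two_ne_zero (by norm_num)
    linarith
  have hL1 : 2 * β * Real.log 2 + 1 ≤ Real.log M := by
    have h := hlogle 0 1 2 le_rfl (by push_cast; linarith) (by norm_num)
      (by push_cast; linarith) (by norm_num) (by push_cast; linarith)
    rw [hp0, hp1, hp2] at h
    have h32 := mul_le_mul_of_nonneg_left hlog32 hβ0.le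
    linarith [h, h32, h2α, hβ24]
  have hlogM1 : (1:ℝ) ≤ Real.log M := by
    have h1 : (0:ℝ) ≤ 2 * β * Real.log 2 := by
      apply mul_nonneg (by linarith) hlog2_0
    linarith
  have hL2 : p K + β * Real.log 2 ≤ Real.log M := by
    have hN0 : (0:ℤ) ≤ ⌊2 * K⌋ := Int.floor_nonneg.mpr (by linarith)
    have hN0' : (0:ℝ) ≤ ((⌊2 * K⌋ : ℤ) : ℝ) := by exact_mod_cast hN0
    have hNle : ((⌊2 * K⌋ : ℤ) : ℝ) ≤ 2 * K := Int.floor_le _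
    have hNge : 2 * K - 1 ≤ ((⌊2 * K⌋ : ℤ) : ℝ) := by
      linarith [Int.sub_one_lt_floor (2 * K)]
    have hN15 : 1.5 * K ≤ ((⌊2 * K⌋ : ℤ) : ℝ) := by linarith
    have h1 := hlogle ⌊2 * K⌋ 0 0 hN0 hNle le_rfl (by push_cast; linarith)
      le_rfl (by push_cast; linarith)
    rw [hp0] at h1
    have h15 : (1 + α/3) * K ^ α ≤ ((⌊2 * K⌋ : ℤ) : ℝ) ^ α := by
      have e1 : ((1.5:ℝ) * K) ^ α = (1.5:ℝ) ^ α * K ^ α :=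
        Real.mul_rpow (by norm_num) hK0.le
      have e2 : ((1.5:ℝ) * K) ^ α ≤ ((⌊2 * K⌋ : ℤ) : ℝ) ^ α :=
        Real.rpow_le_rpow (by positivity) hN15 hα0.le
      have e5 : (1:ℝ)/3 ≤ Real.log (1.5:ℝ) := by
        have hh := Real.log_le_sub_one_of_pos (show (0:ℝ) < 2/3 by norm_num)
        have e6 : Real.log ((2:ℝ)/3) = - Real.log (3/2) := by
          rw [← Real.log_inv]; norm_num
        have e7 : (1.5:ℝ) = 3/2 := by norm_num
        rw [e7]; linarith
      have e3 : 1 + α/3 ≤ (1.5:ℝ) ^ α := by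
        have e4 : (1.5:ℝ) ^ α = Real.exp (Real.log 1.5 * α) :=
          Real.rpow_def_of_pos (by norm_num) α
        have e8 := Real.add_one_le_exp (Real.log 1.5 * α)
        nlinarith [e8, e5, hα0.le]
      nlinarith [e1, e2, e3, Real.rpow_nonneg hK0.le α]
    have h16 : β ^ 2 / 3 ≤ (α/3) * K ^ α := by
      rw [hKα]
      have he : (α/3) * (β ^ 2 / (α * (1 - α))) = β ^ 2 / (3 * (1 - α)) := by
        have hne1 : α ≠ 0 := ne_of_gt hα0
        have hne2 : (1:ℝ) - α ≠ 0 := by linarith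
        field_simp
      rw [he, div_le_div_iff₀ (by norm_num) (by nlinarith)]
      nlinarith [sq_nonneg β]
    have h17 : Real.log (1 + ((⌊2 * K⌋ : ℤ) : ℝ)) ≤ Real.log 2 + Real.log (1 + K) := by
      have ha : (1:ℝ) + ((⌊2 * K⌋ : ℤ) : ℝ) ≤ 2 * (1 + K) := by linarith
      have hb : Real.log (1 + ((⌊2 * K⌋ : ℤ) : ℝ)) ≤ Real.log (2 * (1 + K)) :=
        Real.log_le_log (by linarith) ha
      have hcc : Real.log (2 * (1 + K)) = Real.log 2 + Real.log (1 + K) :=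
        Real.log_mul two_ne_zero (by positivity)
      linarith
    rw [hp K]
    rw [hp _] at h1
    have h18 := mul_le_mul_of_nonneg_left h17 hβ0.le
    have h19 := mul_le_mul_of_nonneg_left hlog2_1 hβ0.le
    have hββ6 : 6 * β ≤ β ^ 2 := by nlinarith
    linarith [h1, h15, h16, h18, h19, hββ6]
  -- main argument
  intro t s r ht0 hs0 hr0 hts
  suffices hgoal : p t ≤ 2 * Real.log M + p s + p r by
    have h := Real.exp_le_exp.mpr hgoal
    have e : Real.exp (2 * Real.log M) = M ^ 2 := by
      rw [two_mul, Real.exp_add, Real.exp_log hMpos, sq]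
    calc Real.exp (p t) ≤ Real.exp (2 * Real.log M + p s + p r) := h
      _ = M ^ 2 * Real.exp (p s) * Real.exp (p r) := by
        rw [Real.exp_add, Real.exp_add, e]
  have hfloor_bound : ∀ x : ℝ, 0 ≤ x → x ≤ 2 * K → p ((⌊x⌋ : ℤ) : ℝ) ≤ Real.log M := by
    intro x hx0 hx2
    have h := hlogle ⌊x⌋ 0 0 (Int.floor_nonneg.mpr hx0)
      (le_trans (Int.floor_le x) hx2) le_rfl (by push_cast; linarith)
      le_rfl (by push_cast; linarith)
    rw [hp0] at h
    linarith
  have hfloor_lb : ∀ x : ℝ, 0 ≤ x → x ≤ 2 * K → - Real.log M ≤ p ((⌊x⌋ : ℤ) : ℝ) := by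
    intro x hx0 hx2
    have h := hlogle 0 ⌊x⌋ 0 le_rfl (by push_cast; linarith)
      (Int.floor_nonneg.mpr hx0) (le_trans (Int.floor_le x) hx2)
      le_rfl (by push_cast; linarith)
    rw [hp0] at h
    linarith
  have hcase : ∀ s r : ℝ, 0 ≤ r → r < K → K ≤ s → t ≤ s + r →
      p t ≤ 2 * Real.log M + p s + p r := by
    intro s r hr0 hrK hsK hts'
    have hpr : - Real.log M - β * Real.log 2 ≤ p r := by
      have h1 := hfloor_lb r hr0 (by linarith)
      have h2 := hround_down r hr0
      linarith
    rcases le_or_gt K t with ht | ht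
    · have h1 : p t ≤ p (s + K) := hmono t (s + K) ht (by linarith)
      have h2 : p (s + K) ≤ p s + p K := hSA s K hsK le_rfl
      linarith [hL2]
    · have h1 := hround_up t ht0
      have h2 := hfloor_bound t ht0 (by linarith)
      have h3 := hPge s hsK
      have hββ : β + 1 ≤ β ^ 2 := by nlinarith
      have h19 := mul_le_mul_of_nonneg_left hlog2_1 hβ0.le
      linarith
  rcases le_or_gt K s with hs | hs <;> rcases le_or_gt K r with hr | hr
  · -- both ≥ K
    rcases le_or_gt K t with ht | ht
    · have h1 : p t ≤ p (s + r) := hmono t (s + r) ht hts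
      have h2 := hSA s r hs hr
      linarith
    · have h1 := hround_up t ht0
      have h2 := hfloor_bound t ht0 (by linarith)
      have h3 := hPge s hs
      have h4 := hPge r hr
      linarith [sq_nonneg β]
  · exact hcase s r hr0 hr hs hts
  · have h := hcase r s hs0 hs hr (by linarith)
    linarith
  · -- both < K
    have h1 := hround_up t ht0
    have h2 := hlogle ⌊t⌋ ⌊s⌋ ⌊r⌋ (Int.floor_nonneg.mpr ht0)
      (le_trans (Int.floor_le t) (by linarith)) (Int.floor_nonneg.mpr hs0)
      (le_trans (Int.floor_le s) (by linarith)) (Int.floor_nonneg.mpr hr0)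
      (le_trans (Int.floor_le r) (by linarith))
    have h3 := hround_down s hs0
    have h4 := hround_down r hr0
    linarith [hL1]

end Helpers



/-- Abstract version of Lemma B.2: given a ternary relation modelling
`σ ⊂ π ⊗ π'`, a subadditive "length" `τ ≥ 0`, `p(x) = x^α - β ln(1+x)`,
`K = (β²/(α(1-α)))^{1/α}` and
`M = max{e^{p(t)-p(s)-p(r)} : t,s,r ∈ [0,2K] ∩ ℤ}`, the weight
`ω = e^{p∘τ}` satisfies `ω(σ) ≤ M² ω(π) ω(π')` on related triples. -/
theorem stmt_15 {S : Type*} (Rel : S → S → S → Prop) (τ : S → ℝ)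
    (hτ0 : ∀ x, 0 ≤ τ x)
    (α β : ℝ) (hα0 : 0 < α) (hα1 : α < 1)
    (hβ : max 1 (6 / (α * (1 - α))) ≤ β)
    (p : ℝ → ℝ) (hp : ∀ x, p x = x ^ α - β * Real.log (1 + x))
    (K : ℝ) (hK : K = (β ^ 2 / (α * (1 - α))) ^ (1 / α))
    (hsub : ∀ σ π π', Rel σ π π' → τ σ ≤ τ π + τ π')
    (M : ℝ)
    (hM : M = sSup {y : ℝ | ∃ t s r : ℤ, 0 ≤ t ∧ (t : ℝ) ≤ 2 * K ∧
      0 ≤ s ∧ (s : ℝ) ≤ 2 * K ∧ 0 ≤ r ∧ (r : ℝ) ≤ 2 * K ∧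
      y = Real.exp (p t - p s - p r)}) :
    ∀ σ π π', Rel σ π π' →
      Real.exp (p (τ σ)) ≤ M ^ 2 * Real.exp (p (τ π)) * Real.exp (p (τ π')) := by
  intro σ π π' hrel
  exact lem_main hα0 hα1 hβ p hp hK hM (τ σ) (τ π) (τ π')
    (hτ0 _) (hτ0 _) (hτ0 _) (hsub _ _ _ hrel)
end

section
/- Let 0 < α < 1 and β ≥ max{1, 6/(α(1-α))}. There exists a constant M ≥ 1 (depending only on α and β) such that for all nonnegative reals s, t, u with u ≤ s + t: e^{u^α}/(e^{s^α} e^{t^α}) ≤ M² · (1+u)^β/((1+s)^β (1+t)^β). -/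
open Real

-- Lemma A: β log(1+x) ≤ c x^α + D for x ≥ 0
lemma stmt16_logbound (α β c : ℝ) (hα0 : 0 < α) (hα1 : α < 1) (hβ : 0 < β) (hc : 0 < c) :
    ∃ D : ℝ, 0 ≤ D ∧ ∀ x : ℝ, 0 ≤ x → β * Real.log (1 + x) ≤ c * x ^ α + D := by
  set A : ℝ := 4 * β / α with hA
  have hA0 : 0 < A := by positivity
  refine ⟨A + A ^ 2 / (4 * c), by positivity, fun x hx => ?_⟩
  have hx1 : (0:ℝ) < 1 + x := by linarith
  have hγ : 0 < α / 2 := by linarith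
  have hγ1 : α / 2 ≤ 1 := by linarith
  have h1 : Real.log (1 + x) = (2 / α) * Real.log ((1 + x) ^ (α / 2)) := by
    rw [Real.log_rpow hx1]; field_simp
  have h2 : Real.log ((1 + x) ^ (α / 2)) ≤ (1 + x) ^ (α / 2) := by
    have := Real.log_le_sub_one_of_pos (Real.rpow_pos_of_pos hx1 (α / 2))
    linarith
  have hxg : 0 ≤ x ^ (α / 2) := Real.rpow_nonneg hx _
  have h3 : (1 + x) ^ (α / 2) ≤ 2 * (1 + x ^ (α / 2)) := by
    rcases le_or_gt x 1 with hx2 | hx2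
    · have e1 : (1 + x) ^ (α / 2) ≤ (2:ℝ) ^ (α / 2) :=
        Real.rpow_le_rpow (by linarith) (by linarith) hγ.le
      have e2 : (2:ℝ) ^ (α / 2) ≤ (2:ℝ) ^ (1:ℝ) :=
        Real.rpow_le_rpow_of_exponent_le one_le_two hγ1
      rw [Real.rpow_one] at e2
      linarith
    · have e1 : (1 + x) ^ (α / 2) ≤ (2 * x) ^ (α / 2) :=
        Real.rpow_le_rpow (by linarith) (by linarith) hγ.le
      have e2 : (2 * x) ^ (α / 2) = (2:ℝ) ^ (α / 2) * x ^ (α / 2) :=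
        Real.mul_rpow (by norm_num) (by linarith)
      have e3 : (2:ℝ) ^ (α / 2) ≤ (2:ℝ) ^ (1:ℝ) :=
        Real.rpow_le_rpow_of_exponent_le one_le_two hγ1
      rw [Real.rpow_one] at e3
      nlinarith
  -- β log(1+x) ≤ A (1 + x^{α/2})
  have h4 : β * Real.log (1 + x) ≤ A * (1 + x ^ (α / 2)) := by
    rw [h1]
    have : (2 / α) * Real.log ((1 + x) ^ (α / 2)) ≤ (2 / α) * (2 * (1 + x ^ (α / 2))) := by
      apply mul_le_mul_of_nonneg_left (h2.trans h3) (by positivity)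
    calc β * ((2 / α) * Real.log ((1 + x) ^ (α / 2)))
        ≤ β * ((2 / α) * (2 * (1 + x ^ (α / 2)))) := by nlinarith [Real.log_nonneg (by linarith : (1:ℝ) ≤ 1 + x), this]
      _ = A * (1 + x ^ (α / 2)) := by rw [hA]; field_simp; ring
  -- A y ≤ c y^2 + A^2/(4c) with y = x^{α/2}, y^2 = x^α
  have h5 : (x ^ (α / 2)) ^ (2:ℕ) = x ^ α := by
    rw [← Real.rpow_natCast (x ^ (α / 2)) 2, ← Real.rpow_mul hx]
    norm_num
  have h6 : A * x ^ (α / 2) ≤ c * x ^ α + A ^ 2 / (4 * c) := by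
    rw [← h5]
    have e : A ^ 2 / (4 * c) * (4 * c) = A ^ 2 := by field_simp
    nlinarith [sq_nonneg (2 * c * x ^ (α / 2) - A), e, hc]
  linarith

lemma stmt16_key (α β D₁ D₂ D₃ : ℝ) (hα0 : 0 < α) (hα1 : α < 1) (hβ : 0 < β)
    (hD₁0 : 0 ≤ D₁) (hD₂0 : 0 ≤ D₂) (hD₃0 : 0 ≤ D₃)
    (hD₁ : ∀ x : ℝ, 0 ≤ x → β * Real.log (1 + x) ≤ 1 * x ^ α + D₁)
    (hD₂ : ∀ x : ℝ, 0 ≤ x → β * Real.log (1 + x) ≤ (1 - α) * x ^ α + D₂)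
    (hD₃ : ∀ x : ℝ, 0 ≤ x → β * Real.log (1 + x) ≤ (1 - (2:ℝ) ^ (-α)) * x ^ α + D₃) :
    ∀ s t u : ℝ, 0 ≤ s → 0 ≤ t → 0 ≤ u → u ≤ s + t → t ≤ s →
      u ^ α - β * Real.log (1 + u) ≤ (s ^ α - β * Real.log (1 + s)) +
        (t ^ α - β * Real.log (1 + t)) + (D₁ + D₂ + D₃ + β * Real.log 2) := by
  intro s t u hs ht hu hust hts
  have hlog2 : 0 ≤ β * Real.log 2 := by
    have := Real.log_nonneg (by norm_num : (1:ℝ) ≤ 2)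
    positivity
  rcases le_or_gt u s with hus | hus
  · -- case u ≤ s : P u ≤ P s + (D₃ + β log 2), and P t ≥ -D₁
    have hPt : -D₁ ≤ t ^ α - β * Real.log (1 + t) := by
      have := hD₁ t ht; linarith
    have hPmono : u ^ α - β * Real.log (1 + u) ≤
        (s ^ α - β * Real.log (1 + s)) + (D₃ + β * Real.log 2) := by
      rcases le_or_gt u (s / 2) with hu2 | hu2
      · have h1 : u ^ α ≤ (s / 2) ^ α := Real.rpow_le_rpow hu hu2 hα0.le
        have h2 : (s / 2) ^ α = s ^ α * (2:ℝ) ^ (-α) := by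
          rw [Real.div_rpow hs (by norm_num), Real.rpow_neg (by norm_num : (0:ℝ) ≤ 2)]
          ring
        have h3 := hD₃ s hs
        have h4 : 0 ≤ β * Real.log (1 + u) := by
          have := Real.log_nonneg (by linarith : (1:ℝ) ≤ 1 + u)
          positivity
        rw [h2] at h1
        linarith
      · have h1 : u ^ α ≤ s ^ α := Real.rpow_le_rpow hu hus hα0.le
        have h2 : Real.log (1 + s) ≤ Real.log 2 + Real.log (1 + u) := by
          rw [← Real.log_mul (by norm_num) (by linarith)]
          exact Real.log_le_log (by linarith) (by linarith)
        have h3 : β * Real.log (1 + s) ≤ β * (Real.log 2 + Real.log (1 + u)) :=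
          mul_le_mul_of_nonneg_left h2 hβ.le
        nlinarith
    linarith
  · -- case s < u ≤ s + t, so 0 < t ≤ s
    have ht0 : 0 < t := by linarith
    have hs0 : 0 < s := lt_of_lt_of_le ht0 hts
    -- u^α ≤ s^α + α t^α
    have step1 : u ^ α ≤ s ^ α + α * t ^ α := by
      have h1 : u ^ α ≤ (s + t) ^ α := Real.rpow_le_rpow hu hust hα0.le
      have h2 : (s + t) ^ α = s ^ α * (1 + t / s) ^ α := by
        rw [← Real.mul_rpow hs (by positivity)]
        congr 1
        field_simp
      have h3 : (1 + t / s) ^ α ≤ 1 + α * (t / s) :=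
        rpow_one_add_le_one_add_mul_self (le_trans (by norm_num) (by positivity : (0:ℝ) ≤ t / s)) hα0.le hα1.le
      have h4 : s ^ α * (t / s) ≤ t ^ α := by
        have e1 : s ^ α * (t / s) = t * (s ^ (α - 1)) := by
          rw [Real.rpow_sub hs0, Real.rpow_one]
          ring
        have e2 : s ^ (α - 1) ≤ t ^ (α - 1) :=
          Real.rpow_le_rpow_of_nonpos ht0 hts (by linarith)
        have e3 : t * t ^ (α - 1) = t ^ α := by
          nth_rewrite 1 [← Real.rpow_one t]
          rw [← Real.rpow_add ht0]
          norm_num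
        calc s ^ α * (t / s) = t * s ^ (α - 1) := e1
          _ ≤ t * t ^ (α - 1) := mul_le_mul_of_nonneg_left e2 ht0.le
          _ = t ^ α := e3
      have h5 : (0:ℝ) ≤ s ^ α := Real.rpow_nonneg hs α
      calc u ^ α ≤ s ^ α * (1 + t / s) ^ α := by rw [← h2]; exact h1
        _ ≤ s ^ α * (1 + α * (t / s)) := mul_le_mul_of_nonneg_left h3 h5
        _ = s ^ α + α * (s ^ α * (t / s)) := by ring
        _ ≤ s ^ α + α * t ^ α := by nlinarith
    have step2 : β * Real.log (1 + s) ≤ β * Real.log (1 + u) :=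
      mul_le_mul_of_nonneg_left (Real.log_le_log (by linarith) (by linarith)) hβ.le
    have step3 := hD₂ t ht
    linarith

/-- Quantitative domination of the exponential weight `e^{x^α}` by the
polynomial weight `(1+x)^β`: for `0 < α < 1` and `β ≥ max{1, 6/(α(1-α))}`
there is `M ≥ 1` with
`e^{u^α}/(e^{s^α} e^{t^α}) ≤ M² (1+u)^β/((1+s)^β (1+t)^β)`
whenever `s, t, u ≥ 0` and `u ≤ s + t`. -/
theorem stmt_16 (α β : ℝ) (hα0 : 0 < α) (hα1 : α < 1)
    (hβ : max 1 (6 / (α * (1 - α))) ≤ β) :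
    ∃ M : ℝ, 1 ≤ M ∧ ∀ s t u : ℝ, 0 ≤ s → 0 ≤ t → 0 ≤ u → u ≤ s + t →
      Real.exp (u ^ α) / (Real.exp (s ^ α) * Real.exp (t ^ α)) ≤
        M ^ 2 * ((1 + u) ^ β / ((1 + s) ^ β * (1 + t) ^ β)) := by
  have hβ1 : (1:ℝ) ≤ β := le_trans (le_max_left _ _) hβ
  have hβ0 : (0:ℝ) < β := by linarith
  have hc3 : (0:ℝ) < 1 - (2:ℝ) ^ (-α) := by
    have : (2:ℝ) ^ (-α) < 1 :=
      Real.rpow_lt_one_of_one_lt_of_neg (by norm_num) (by linarith)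
    linarith
  obtain ⟨D₁, hD₁0, hD₁⟩ := stmt16_logbound α β 1 hα0 hα1 hβ0 one_pos
  obtain ⟨D₂, hD₂0, hD₂⟩ := stmt16_logbound α β (1 - α) hα0 hα1 hβ0 (by linarith)
  obtain ⟨D₃, hD₃0, hD₃⟩ := stmt16_logbound α β (1 - (2:ℝ) ^ (-α)) hα0 hα1 hβ0 hc3
  set L : ℝ := D₁ + D₂ + D₃ + β * Real.log 2 with hL
  have hlog2 : 0 ≤ β * Real.log 2 := by
    have := Real.log_nonneg (by norm_num : (1:ℝ) ≤ 2)
    positivity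
  have hL0 : 0 ≤ L := by positivity
  have key := stmt16_key α β D₁ D₂ D₃ hα0 hα1 hβ0 hD₁0 hD₂0 hD₃0 hD₁ hD₂ hD₃
  refine ⟨Real.exp (L / 2), Real.one_le_exp (by linarith), fun s t u hs ht hu hust => ?_⟩
  have hPkey : u ^ α - β * Real.log (1 + u) ≤ (s ^ α - β * Real.log (1 + s)) +
      (t ^ α - β * Real.log (1 + t)) + L := by
    rcases le_total t s with h | h
    · exact key s t u hs ht hu hust h
    · have := key t s u ht hs hu (by linarith) h
      linarith
  have hs1 : (0:ℝ) < 1 + s := by linarith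
  have ht1 : (0:ℝ) < 1 + t := by linarith
  have hu1 : (0:ℝ) < 1 + u := by linarith
  have eM : Real.exp (L / 2) ^ 2 = Real.exp L := by
    rw [sq, ← Real.exp_add]
    norm_num
  rw [eM, Real.rpow_def_of_pos hs1, Real.rpow_def_of_pos ht1, Real.rpow_def_of_pos hu1,
    ← Real.exp_add, ← Real.exp_add, div_eq_mul_inv, ← Real.exp_neg, ← Real.exp_add,
    div_eq_mul_inv, ← Real.exp_neg, ← Real.exp_add, ← Real.exp_add]
  apply Real.exp_le_exp.mpr
  nlinarith [hPkey]
end
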